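/- arXiv:1909.08193 — 3 statements merged into one kernel-verified Lean document; each statement's English description precedes it below -/
import Mathlib

section
/- Let f : ℕ → ℝ be an additive number-theoretical function, i.e. f(mn) = f(m) + f(n) for all positive integers m, n, and suppose that lim_{n→∞} (f(n+1) − f(n)) = 0. Then there exists a constant c ∈ ℝ such that f(n) = c · log n for all positive integers n. -/
open Filter Real Topology

set_option maxHeartbeats 1000000 in
/-- If `f : ℕ → ℝ` is an additive number-theoretical function, i.e.
`f (m * n) = f m + f n` for all positive integers `m, n`, and
`f (n + 1) - f n → 0` as `n → ∞`, then there is a constant `c` with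
`f n = c * log n` for all positive `n`. -/
theorem erdos_additive_characterization_of_log
    (f : ℕ → ℝ)
    (hadd : ∀ m n : ℕ, 0 < m → 0 < n → f (m * n) = f m + f n)
    (hlim : Filter.Tendsto (fun n : ℕ => f (n + 1) - f n) Filter.atTop (nhds 0)) :
    ∃ c : ℝ, ∀ n : ℕ, 0 < n → f n = c * Real.log n := by
  have key : ∀ a : ℕ, 2 ≤ a →
      Tendsto (fun n : ℕ => f n / Real.log n) atTop (𝓝 (f a / Real.log a)) := by
    intro a ha
    set c : ℝ := f a / Real.log a with hc
    have ha1 : (1:ℝ) < (a:ℝ) := by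
      have : (2:ℝ) ≤ (a:ℝ) := by exact_mod_cast ha
      linarith
    have haR : (0:ℝ) < (a:ℝ) := by linarith
    have hloga : 0 < Real.log a := Real.log_pos ha1
    have hfa : f a = c * Real.log a := by
      rw [hc, div_mul_cancel₀ _ (ne_of_gt hloga)]
    clear_value c
    have hmax : ∀ M : ℕ, ∃ C : ℝ, ∀ m, m < M → |f m - c * Real.log m| ≤ C := by
      intro M
      induction M with
      | zero => exact ⟨0, fun m hm => absurd hm (Nat.not_lt_zero m)⟩
      | succ M ih =>
        obtain ⟨C, hC⟩ := ih
        refine ⟨max C (|f M - c * Real.log M|), fun m hm => ?_⟩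
        rcases Nat.lt_succ_iff_lt_or_eq.mp hm with h | h
        · exact (hC m h).trans (le_max_left _ _)
        · subst h; exact le_max_right _ _
    -- main quantitative bound
    have bound : ∀ K : ℝ, 0 < K → ∃ C : ℝ, ∀ n : ℕ, 1 ≤ n →
        |f n - c * Real.log n| ≤ C + K * Real.log n := by
      intro K hK
      set ε : ℝ := K * Real.log a / (2 * a) with hεdef
      have hε0 : 0 < ε := by positivity
      have heps : ((a:ℝ) - 1) * ε ≤ K * Real.log a / 2 := by
        have h2 : 0 ≤ (K * Real.log a) / (2*(a:ℝ)) := by positivity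
        have h3 : ((a:ℝ) - 1) * ε = K * Real.log a / 2 - K * Real.log a / (2*(a:ℝ)) := by
          rw [hεdef]
          field_simp
        linarith
      clear_value ε
      obtain ⟨N₀, hN₀⟩ := Metric.tendsto_atTop.mp hlim ε hε0
      have hd : ∀ m : ℕ, N₀ ≤ m → |f (m+1) - f m| ≤ ε := by
        intro m hm
        have h := hN₀ m hm
        rw [Real.dist_eq, sub_zero] at h
        exact h.le
      have tele : ∀ s t : ℕ, N₀ ≤ s → s ≤ t → |f t - f s| ≤ ((t - s : ℕ) : ℝ) * ε := by
        intro s t hs hst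
        induction t, hst using Nat.le_induction with
        | base => simp
        | succ t hst ih =>
          have h1 : f (t+1) - f s = (f (t+1) - f t) + (f t - f s) := by ring
          have h2 := hd t (hs.trans hst)
          have hcast : ((t + 1 - s : ℕ) : ℝ) = ((t - s : ℕ) : ℝ) + 1 := by
            have h3 : t + 1 - s = (t - s) + 1 := by omega
            rw [h3]; push_cast; ring
          calc |f (t+1) - f s| ≤ |f (t+1) - f t| + |f t - f s| := by
                rw [h1]; exact abs_add_le _ _
          _ ≤ ε + ((t - s : ℕ) : ℝ) * ε := by linarith
          _ = ((t + 1 - s : ℕ) : ℝ) * ε := by rw [hcast]; ring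
      set Q₀ : ℕ := ⌈2 * (|c| + 1) / (K * Real.log a)⌉₊ + 2 with hQ₀def
      have hQ₀pos : 0 < Q₀ := by omega
      have hQ₀ge : 2 * (|c| + 1) / (K * Real.log a) ≤ (Q₀ : ℝ) := by
        calc 2 * (|c| + 1) / (K * Real.log a)
            ≤ (⌈2 * (|c| + 1) / (K * Real.log a)⌉₊ : ℝ) := Nat.le_ceil _
        _ ≤ (Q₀ : ℝ) := by exact_mod_cast by omega
      clear_value Q₀
      set M : ℕ := max (N₀ + a) (a * Q₀) with hMdef
      have hM1 : N₀ + a ≤ M := le_max_left _ _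
      have hM2 : a * Q₀ ≤ M := le_max_right _ _
      clear_value M
      obtain ⟨C, hC⟩ := hmax M
      refine ⟨C, ?_⟩
      intro n
      induction n using Nat.strong_induction_on with
      | _ n ih =>
        intro hn
        have hlogn0 : 0 ≤ Real.log n := Real.log_natCast_nonneg n
        by_cases hnM : n < M
        · have := hC n hnM
          nlinarith [mul_nonneg hK.le hlogn0]
        · push_neg at hnM
          have ha0 : 0 < a := by omega
          obtain ⟨q, hqdef⟩ : ∃ q, q = n / a := ⟨n / a, rfl⟩
          have hq1 : Q₀ ≤ q := by
            rw [hqdef, Nat.le_div_iff_mul_le ha0]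
            calc Q₀ * a = a * Q₀ := by ring
            _ ≤ M := hM2
            _ ≤ n := hnM
          have hq0 : 0 < q := lt_of_lt_of_le hQ₀pos hq1
          have haq_le : a * q ≤ n := by
            rw [hqdef, mul_comm]; exact Nat.div_mul_le_self n a
          have hlt : n < a * q + a := by
            subst hqdef
            have h1 := Nat.div_add_mod n a
            have h2 := Nat.mod_lt n ha0
            omega
          have hqn : q < n := by
            rw [hqdef]; exact Nat.div_lt_self (by omega) (by omega)
          have haqpos : (0:ℝ) < ((a*q : ℕ) : ℝ) := by
            have : 0 < a * q := Nat.mul_pos ha0 hq0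
            exact_mod_cast this
          have hnpos : (0:ℝ) < (n:ℝ) := by
            have : 0 < n := by omega
            exact_mod_cast this
          -- telescoping estimate
          have hstep1 : |f n - f (a*q)| ≤ ((a:ℝ) - 1) * ε := by
            have hs : N₀ ≤ a * q := by omega
            have ht := tele (a*q) n hs haq_le
            have hsub : n - a*q ≤ a - 1 := by omega
            have hcast : ((n - a*q : ℕ) : ℝ) ≤ (a:ℝ) - 1 := by
              have h1 : ((n - a*q : ℕ) : ℝ) ≤ ((a - 1 : ℕ) : ℝ) := by exact_mod_cast hsub
              have h2 : ((a - 1 : ℕ) : ℝ) = (a:ℝ) - 1 := by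
                have h3 : 1 ≤ a := by omega
                push_cast [h3]; ring
              linarith
            nlinarith [hε0.le]
          -- logarithm estimates
          have hΔnonneg : 0 ≤ Real.log n - Real.log ((a*q : ℕ) : ℝ) := by
            have h1 : ((a*q:ℕ):ℝ) ≤ (n:ℝ) := by exact_mod_cast haq_le
            have := Real.log_le_log haqpos h1
            linarith
          have hqR : (0:ℝ) < (q:ℝ) := by exact_mod_cast hq0
          have hΔle : Real.log n - Real.log ((a*q : ℕ) : ℝ) ≤ 1 / (q:ℝ) := by
            have hratio : Real.log n - Real.log ((a*q:ℕ):ℝ)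
                = Real.log ((n:ℝ) / ((a*q:ℕ):ℝ)) := by
              rw [Real.log_div (ne_of_gt hnpos) (ne_of_gt haqpos)]
            rw [hratio]
            have hpos : (0:ℝ) < (n:ℝ) / ((a*q:ℕ):ℝ) := by positivity
            have h1 := Real.log_le_sub_one_of_pos hpos
            have h2 : (n:ℝ) / ((a*q:ℕ):ℝ) - 1 ≤ 1 / (q:ℝ) := by
              rw [div_sub_one (ne_of_gt haqpos), div_le_div_iff₀ haqpos hqR]
              have hcast : ((a*q:ℕ):ℝ) = (a:ℝ) * (q:ℝ) := by push_cast; ring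
              have hnle : (n:ℝ) ≤ (a:ℝ) * (q:ℝ) + (a:ℝ) := by
                have h3 : (n:ℝ) ≤ ((a*q + a : ℕ):ℝ) := by exact_mod_cast hlt.le
                push_cast at h3; linarith
              rw [hcast]
              nlinarith
            linarith
          have hcq : |c| * (Real.log n - Real.log ((a*q:ℕ):ℝ)) ≤ K * Real.log a / 2 := by
            have hQR : (0:ℝ) < (Q₀:ℝ) := by exact_mod_cast hQ₀pos
            have hqQ : (Q₀:ℝ) ≤ (q:ℝ) := by exact_mod_cast hq1
            have h1 : |c| * (Real.log n - Real.log ((a*q:ℕ):ℝ)) ≤ |c| * (1/(q:ℝ)) :=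
              mul_le_mul_of_nonneg_left hΔle (abs_nonneg c)
            have h2 : |c| * (1/(q:ℝ)) ≤ (|c| + 1) * (1/(Q₀:ℝ)) := by
              have h4 := abs_nonneg c
              rw [mul_one_div, mul_one_div, div_le_div_iff₀ hqR hQR]
              nlinarith
            have h3 : (|c| + 1) * (1/(Q₀:ℝ)) ≤ K * Real.log a / 2 := by
              have hKL : 0 < K * Real.log a := by positivity
              rw [mul_one_div, div_le_div_iff₀ hQR (by norm_num : (0:ℝ) < 2)]
              have h5 := (div_le_iff₀ hKL).mp hQ₀ge
              nlinarith
            linarith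
          -- additive identities
          have hfq : f (a*q) = f a + f q := hadd a q ha0 hq0
          have hlogaq : Real.log ((a*q:ℕ):ℝ) = Real.log a + Real.log q := by
            have hcast : ((a*q:ℕ):ℝ) = (a:ℝ) * (q:ℝ) := by push_cast; ring
            rw [hcast, Real.log_mul (ne_of_gt haR) (ne_of_gt hqR)]
          have ihq := ih q hqn (by omega : 1 ≤ q)
          -- assemble
          have hdecomp : f n - c * Real.log n
              = ((f n - f (a*q)) - c * (Real.log n - Real.log ((a*q:ℕ):ℝ)))
                + (f q - c * Real.log q) := by
            rw [hfq, hlogaq, hfa]; ring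
          have habs : |f n - c * Real.log n|
              ≤ |f n - f (a*q)| + |c| * (Real.log n - Real.log ((a*q:ℕ):ℝ))
                + |f q - c * Real.log q| := by
            rw [hdecomp]
            have t1 : |((f n - f (a*q)) - c * (Real.log n - Real.log ((a*q:ℕ):ℝ)))
                + (f q - c * Real.log q)|
                ≤ |(f n - f (a*q)) - c * (Real.log n - Real.log ((a*q:ℕ):ℝ))|
                  + |f q - c * Real.log q| := abs_add_le _ _
            have t2 : |(f n - f (a*q)) - c * (Real.log n - Real.log ((a*q:ℕ):ℝ))|
                ≤ |f n - f (a*q)| + |c * (Real.log n - Real.log ((a*q:ℕ):ℝ))| := by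
              have := abs_add_le (f n - f (a*q)) (-(c * (Real.log n - Real.log ((a*q:ℕ):ℝ))))
              rw [abs_neg] at this
              calc |(f n - f (a*q)) - c * (Real.log n - Real.log ((a*q:ℕ):ℝ))|
                  = |(f n - f (a*q)) + -(c * (Real.log n - Real.log ((a*q:ℕ):ℝ)))| := by
                    rw [sub_eq_add_neg]
              _ ≤ _ := this
            have t3 : |c * (Real.log n - Real.log ((a*q:ℕ):ℝ))|
                = |c| * (Real.log n - Real.log ((a*q:ℕ):ℝ)) := by
              rw [abs_mul, abs_of_nonneg hΔnonneg]
            rw [t3] at t2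
            linarith
          have hlogsum : K * Real.log a + K * Real.log q ≤ K * Real.log n := by
            have h1 : Real.log ((a*q:ℕ):ℝ) ≤ Real.log n := by linarith
            rw [hlogaq] at h1
            nlinarith [mul_le_mul_of_nonneg_left h1 hK.le]
          calc |f n - c * Real.log n|
              ≤ ((a:ℝ)-1)*ε + K * Real.log a / 2 + (C + K * Real.log q) := by linarith
          _ ≤ C + K * Real.log a + K * Real.log q := by linarith
          _ ≤ C + K * Real.log n := by linarith
    -- derive the limit from the bound
    rw [Metric.tendsto_atTop]
    intro δ hδ
    obtain ⟨C, hC⟩ := bound (δ/2) (by positivity)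
    refine ⟨max 2 ⌈Real.exp (2 * (|C| + 1) / δ)⌉₊, fun n hn => ?_⟩
    have hn2 : 2 ≤ n := le_trans (le_max_left _ _) hn
    have hlogn : 2 * (|C| + 1) / δ ≤ Real.log n := by
      have h1 : Real.exp (2 * (|C| + 1) / δ) ≤ (n:ℝ) := by
        calc Real.exp (2 * (|C| + 1) / δ) ≤ (⌈Real.exp (2 * (|C| + 1) / δ)⌉₊ : ℝ) :=
              Nat.le_ceil _
        _ ≤ (n:ℝ) := by exact_mod_cast le_trans (le_max_right _ _) hn
      have h2 := Real.log_le_log (Real.exp_pos _) h1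
      rwa [Real.log_exp] at h2
    have hlogn0 : 0 < Real.log n := by
      apply Real.log_pos
      have : (2:ℝ) ≤ (n:ℝ) := by exact_mod_cast hn2
      linarith
    rw [Real.dist_eq]
    have heq : f n / Real.log n - c = (f n - c * Real.log n) / Real.log n := by
      field_simp
    rw [heq, abs_div, abs_of_pos hlogn0, div_lt_iff₀ hlogn0]
    have h1 := hC n (by omega)
    have h2 : 2 * (|C| + 1) ≤ δ * Real.log n := by
      rw [div_le_iff₀ hδ] at hlogn
      linarith
    have h3 : C ≤ |C| := le_abs_self C
    nlinarith
  -- conclude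
  refine ⟨f 2 / Real.log 2, fun n hn => ?_⟩
  rcases Nat.lt_or_ge n 2 with h | h
  · have hn1 : n = 1 := by omega
    subst hn1
    have h11 := hadd 1 1 one_pos one_pos
    norm_num at h11
    rw [show ((1:ℕ):ℝ) = 1 by norm_num, Real.log_one, mul_zero]
    linarith
  · have h2 := tendsto_nhds_unique (key n h) (key 2 le_rfl)
    have hlogn : Real.log (n:ℝ) ≠ 0 := by
      have h3 : (1:ℝ) < (n:ℝ) := by
        have : (2:ℝ) ≤ (n:ℝ) := by exact_mod_cast h
        linarith
      exact ne_of_gt (Real.log_pos h3)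
    have h4 := (div_eq_iff hlogn).mp h2
    rw [h4]
    norm_num
end

section
/- Let F : ℕ → ℝ × ℝ (viewing the hyperbolic numbers 𝔻 = ℝe₁ + ℝe₂ in idempotent representation as pairs of real numbers with componentwise addition and multiplication) satisfy F(mn) = F(m) + F(n) for all positive integers m, n, and suppose that lim_{n→∞} (F(n+1) − F(n)) = (0,0). Then there exists κ = (c₁, c₂) ∈ ℝ × ℝ such that F(n) = κ · Log_𝔻(n) for all positive integers n, where Log_𝔻(n) = (log n, log n) is the hyperbolic logarithm of the real number n embedded in 𝔻, and the product κ · Log_𝔻(n) = (c₁ log n, c₂ log n) is componentwise. -/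
open Filter Finset

private lemma erdos_real (f : ℕ → ℝ)
    (hadd : ∀ m n : ℕ, 0 < m → 0 < n → f (m * n) = f m + f n)
    (hlim : Tendsto (fun n : ℕ => f (n + 1) - f n) atTop (nhds 0)) :
    ∀ n : ℕ, 0 < n → f n = (f 2 / Real.log 2) * Real.log n := by
  have hlog2 : (0:ℝ) < Real.log 2 := Real.log_pos one_lt_two
  have f1 : f 1 = 0 := by have := hadd 1 1 one_pos one_pos; simp at this; linarith
  set e : ℕ → ℝ := fun m => f m - f (2 * (m / 2)) with he
  -- expansion along binary digits
  have expand : ∀ n : ℕ, 0 < n →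
      f n = (Nat.log 2 n : ℝ) * f 2 + ∑ i ∈ range (Nat.log 2 n), e (n / 2 ^ i) := by
    intro n
    induction n using Nat.strong_induction_on with
    | _ n ih =>
      intro hn
      rcases lt_or_ge n 2 with h2 | h2
      · interval_cases n
        simp [f1]
      · have hm : 0 < n / 2 := Nat.div_pos h2 (by norm_num)
        have hmn : n / 2 < n := Nat.div_lt_self hn (by norm_num)
        have hlogpos : 0 < Nat.log 2 n := Nat.log_pos one_lt_two h2
        have hlog : Nat.log 2 n = Nat.log 2 (n / 2) + 1 := by
          have := Nat.log_div_base 2 n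
          omega
        have hfe : f n = f 2 + f (n / 2) + e n := by
          have h2m : f (2 * (n / 2)) = f 2 + f (n / 2) := hadd 2 (n / 2) two_pos hm
          simp only [he]
          linarith
        have hsum : ∑ i ∈ range (Nat.log 2 (n / 2) + 1), e (n / 2 ^ i)
            = (∑ i ∈ range (Nat.log 2 (n / 2)), e ((n / 2) / 2 ^ i)) + e n := by
          rw [Finset.sum_range_succ']
          congr 1
          · refine Finset.sum_congr rfl fun i _ => ?_
            congr 1
            rw [Nat.div_div_eq_div_mul, ← pow_succ']
          · simp
        rw [hlog, hsum]
        rw [ih (n / 2) hmn hm] at hfe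
        push_cast
        linear_combination hfe
  -- bound on e for m ≥ 2
  have ebound : ∀ m : ℕ, 2 ≤ m → |e m| ≤ |f (m - 1 + 1) - f (m - 1)| := by
    intro m hm
    rcases Nat.even_or_odd m with hpar | hpar
    · obtain ⟨t, rfl⟩ := hpar
      have hmm : 2 * ((t + t) / 2) = t + t := by omega
      simp only [he, hmm, sub_self, abs_zero]
      positivity
    · obtain ⟨t, rfl⟩ := hpar
      have h1 : 2 * ((2 * t + 1) / 2) = 2 * t + 1 - 1 := by omega
      have h2 : 2 * t + 1 - 1 + 1 = 2 * t + 1 := by omega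
      simp only [he, h1, h2]
      exact le_rfl
  -- main quantitative bound
  set c : ℝ := f 2 / Real.log 2 with hc
  have bound : ∀ ε : ℝ, 0 < ε → ∃ K : ℝ, ∀ n : ℕ, 0 < n →
      |f n - c * Real.log n| ≤ ε * Real.log n + K := by
    intro ε hε
    obtain ⟨N0, hN0⟩ := (Metric.tendsto_atTop.mp hlim) 1 one_pos
    set B : ℝ := 1 + ∑ j ∈ range N0, |f (j + 1) - f j| with hBdef
    have hsum0 : (0:ℝ) ≤ ∑ j ∈ range N0, |f (j + 1) - f j| :=
      Finset.sum_nonneg fun i _ => abs_nonneg _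
    have hBpos : (0:ℝ) < B := by linarith
    have hB : ∀ j : ℕ, |f (j + 1) - f j| ≤ B := by
      intro j
      rcases lt_or_ge j N0 with h | h
      · have h1 : |f (j + 1) - f j| ≤ ∑ i ∈ range N0, |f (i + 1) - f i| :=
          Finset.single_le_sum (f := fun i => |f (i + 1) - f i|)
            (fun i _ => abs_nonneg _) (Finset.mem_range.mpr h)
        linarith
      · have := hN0 j h
        rw [Real.dist_eq, sub_zero] at this
        linarith
    have hε' : 0 < ε * Real.log 2 := by positivity
    obtain ⟨N1, hN1⟩ := (Metric.tendsto_atTop.mp hlim) (ε * Real.log 2) hε'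
    set N : ℕ := max N1 1 with hNdef
    have hN : ∀ j : ℕ, N ≤ j → |f (j + 1) - f j| ≤ ε * Real.log 2 := by
      intro j hj
      have := hN1 j (le_trans (le_max_left _ _) hj)
      rw [Real.dist_eq, sub_zero] at this
      linarith
    have hN1' : 1 ≤ N := le_max_right _ _
    set C : ℕ := Nat.log 2 N with hCdef
    refine ⟨|f 2| + (C : ℝ) * B, ?_⟩
    intro n hn
    set L : ℕ := Nat.log 2 n with hLdef
    -- bounds relating L and log n
    have hpowle : (2:ℕ) ^ L ≤ n := Nat.pow_log_le_self 2 hn.ne'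
    have hltpow : n < 2 ^ (L + 1) := Nat.lt_pow_succ_log_self one_lt_two n
    have h1 : (L : ℝ) * Real.log 2 ≤ Real.log n := by
      have : ((2:ℝ)) ^ L ≤ (n : ℝ) := by exact_mod_cast hpowle
      have := Real.log_le_log (by positivity) this
      rwa [Real.log_pow] at this
    have h2 : Real.log n ≤ ((L : ℝ) + 1) * Real.log 2 := by
      have hcast : (n : ℝ) ≤ (2:ℝ) ^ (L + 1) := by exact_mod_cast hltpow.le
      have := Real.log_le_log (by exact_mod_cast hn) hcast
      rw [Real.log_pow] at this
      push_cast at this ⊢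
      linarith
    -- bound the remainder sum
    have hR : |∑ i ∈ range L, e (n / 2 ^ i)| ≤ (L : ℝ) * (ε * Real.log 2) + (C : ℝ) * B := by
      have step1 : |∑ i ∈ range L, e (n / 2 ^ i)| ≤ ∑ i ∈ range L, |e (n / 2 ^ i)| :=
        Finset.abs_sum_le_sum_abs _ _
      have step2 : ∀ i ∈ range L,
          |e (n / 2 ^ i)| ≤ ε * Real.log 2 + (if n / 2 ^ i ≤ N then B else 0) := by
        intro i hi
        rw [Finset.mem_range] at hi
        have hm2 : 2 ≤ n / 2 ^ i := by
          have hple : 2 ^ (i + 1) ≤ 2 ^ L := Nat.pow_le_pow_right (by norm_num) hi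
          have : 2 * 2 ^ i ≤ n := by
            calc 2 * 2 ^ i = 2 ^ (i + 1) := (pow_succ' 2 i).symm
              _ ≤ 2 ^ L := hple
              _ ≤ n := hpowle
          exact (Nat.le_div_iff_mul_le (Nat.pow_pos (by norm_num))).mpr this
        have hb := ebound (n / 2 ^ i) hm2
        by_cases hcase : n / 2 ^ i ≤ N
        · simp only [hcase, if_true]
          have := hB (n / 2 ^ i - 1)
          have h3 : n / 2 ^ i - 1 + 1 = n / 2 ^ i := by omega
          rw [h3] at this hb
          linarith
        · simp only [hcase, if_false]
          push_neg at hcase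
          have hge : N ≤ n / 2 ^ i - 1 := by omega
          have := hN (n / 2 ^ i - 1) hge
          have h3 : n / 2 ^ i - 1 + 1 = n / 2 ^ i := by omega
          rw [h3] at this hb
          linarith
      have step3 : ∑ i ∈ range L, |e (n / 2 ^ i)|
          ≤ ∑ i ∈ range L, (ε * Real.log 2 + (if n / 2 ^ i ≤ N then B else 0)) :=
        Finset.sum_le_sum step2
      have step4 : ∑ i ∈ range L, (ε * Real.log 2 + (if n / 2 ^ i ≤ N then B else 0))
          = (L : ℝ) * (ε * Real.log 2) + ∑ i ∈ range L, (if n / 2 ^ i ≤ N then B else 0) := by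
        rw [Finset.sum_add_distrib, Finset.sum_const, Finset.card_range, nsmul_eq_mul]
      have step5 : ∑ i ∈ range L, (if n / 2 ^ i ≤ N then B else 0) ≤ (C : ℝ) * B := by
        rw [← Finset.sum_filter]
        rw [Finset.sum_const, nsmul_eq_mul]
        have hsub : (range L).filter (fun i => n / 2 ^ i ≤ N) ⊆ Finset.Ico (L - C) L := by
          intro i hi
          rw [Finset.mem_filter, Finset.mem_range] at hi
          obtain ⟨hiL, hiN⟩ := hi
          have hdiv : 2 ^ (L - i) ≤ n / 2 ^ i := by
            have : 2 ^ L / 2 ^ i ≤ n / 2 ^ i := Nat.div_le_div_right hpowle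
            rwa [Nat.pow_div hiL.le (by norm_num)] at this
          have : 2 ^ (L - i) ≤ N := le_trans hdiv hiN
          have hLC : L - i ≤ C := by
            rw [hCdef]
            exact (Nat.le_log_iff_pow_le one_lt_two (by omega)).mpr this
          rw [Finset.mem_Ico]
          omega
        have hcard : ((range L).filter (fun i => n / 2 ^ i ≤ N)).card ≤ C := by
          have := Finset.card_le_card hsub
          rw [Nat.card_Ico] at this
          omega
        have : (((range L).filter (fun i => n / 2 ^ i ≤ N)).card : ℝ) ≤ (C : ℝ) := by
          exact_mod_cast hcard
        nlinarith [hBpos]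
      calc |∑ i ∈ range L, e (n / 2 ^ i)| ≤ _ := step1
        _ ≤ _ := step3
        _ = _ := step4
        _ ≤ (L : ℝ) * (ε * Real.log 2) + (C : ℝ) * B := by linarith
    -- assemble
    have hexp := expand n hn
    have hgform : f n - c * Real.log n
        = f 2 * ((L : ℝ) - Real.log n / Real.log 2) + ∑ i ∈ range L, e (n / 2 ^ i) := by
      rw [hexp, hc]
      field_simp
      ring
    have habs1 : |(L : ℝ) - Real.log n / Real.log 2| ≤ 1 := by
      rw [abs_le]
      constructor
      · rw [le_sub_iff_add_le]
        have : Real.log n / Real.log 2 ≤ (L : ℝ) + 1 := by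
          rw [div_le_iff₀ hlog2]; linarith
        linarith
      · rw [sub_le_iff_le_add]
        have : (L : ℝ) ≤ Real.log n / Real.log 2 := by
          rw [le_div_iff₀ hlog2]; linarith
        linarith
    have hLε : (L : ℝ) * (ε * Real.log 2) ≤ ε * Real.log n := by
      have := mul_le_mul_of_nonneg_right h1 hε.le
      nlinarith
    calc |f n - c * Real.log n|
        = |f 2 * ((L : ℝ) - Real.log n / Real.log 2) + ∑ i ∈ range L, e (n / 2 ^ i)| := by
          rw [hgform]
      _ ≤ |f 2 * ((L : ℝ) - Real.log n / Real.log 2)| + |∑ i ∈ range L, e (n / 2 ^ i)| :=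
          abs_add_le _ _
      _ ≤ |f 2| * 1 + ((L : ℝ) * (ε * Real.log 2) + (C : ℝ) * B) := by
          rw [abs_mul]
          gcongr
      _ ≤ ε * Real.log n + (|f 2| + (C : ℝ) * B) := by linarith
  -- conclude
  intro n hn
  rcases eq_or_lt_of_le (Nat.succ_le_of_lt hn) with h1 | h2
  · rw [← h1]
    simp [f1]
  · have hn2 : 2 ≤ n := h2
    have hpow : ∀ j : ℕ, f (n ^ j) = (j : ℝ) * f n := by
      intro j
      induction j with
      | zero => simpa using f1
      | succ j ihj =>
        rw [pow_succ, hadd (n ^ j) n (Nat.pow_pos hn) hn, ihj]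
        push_cast
        ring
    have hlogn : 0 < Real.log n := Real.log_pos (by exact_mod_cast h2)
    have key : ∀ δ : ℝ, 0 < δ → |f n - c * Real.log n| ≤ δ := by
      intro δ hδ
      obtain ⟨K, hK⟩ := bound (δ / (2 * Real.log n)) (by positivity)
      set j : ℕ := max 1 (Nat.ceil (2 * K / δ)) with hjdef
      have hj1 : 1 ≤ j := le_max_left _ _
      have hjR : (1:ℝ) ≤ (j : ℝ) := by exact_mod_cast hj1
      have hKj : K ≤ (j : ℝ) * δ / 2 := by
        have hceil : (Nat.ceil (2 * K / δ) : ℕ) ≤ j := le_max_right _ _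
        have : 2 * K / δ ≤ (j : ℝ) := by
          calc 2 * K / δ ≤ (Nat.ceil (2 * K / δ) : ℝ) := Nat.le_ceil _
            _ ≤ (j : ℝ) := by exact_mod_cast hceil
        rw [div_le_iff₀ hδ] at this
        linarith
      have hnj : 0 < n ^ j := Nat.pow_pos hn
      have happ := hK (n ^ j) hnj
      have hlogpow : Real.log ((n : ℕ) ^ j : ℕ) = (j : ℝ) * Real.log n := by
        push_cast
        rw [Real.log_pow]
      rw [hpow j, hlogpow] at happ
      have hfactor : (j : ℝ) * f n - c * ((j : ℝ) * Real.log n)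
          = (j : ℝ) * (f n - c * Real.log n) := by ring
      rw [hfactor, abs_mul, abs_of_pos (by linarith : (0:ℝ) < (j:ℝ))] at happ
      have hsimp : δ / (2 * Real.log n) * ((j : ℝ) * Real.log n) = (j : ℝ) * δ / 2 := by
        field_simp
      rw [hsimp] at happ
      have hjabs : (j : ℝ) * |f n - c * Real.log n| ≤ (j : ℝ) * δ := by linarith
      have := le_of_mul_le_mul_left hjabs (by linarith : (0:ℝ) < (j:ℝ))
      exact this
    have h0 : |f n - c * Real.log n| ≤ 0 := by
      apply le_of_forall_pos_le_add
      intro ε hε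
      simpa using key ε hε
    have hfin : f n - c * Real.log n = 0 := abs_nonpos_iff.mp h0
    linarith

/-- Hyperbolic version of Erdős' lemma.  The hyperbolic numbers `𝔻` are
identified with `ℝ × ℝ` in the idempotent representation, with
componentwise addition and multiplication.  If `F : ℕ → ℝ × ℝ` satisfies
`F (m * n) = F m + F n` for positive `m, n`, and `F (n + 1) - F n → (0, 0)`,
then there is `κ = (c₁, c₂) ∈ ℝ × ℝ` such that
`F n = κ * Log_𝔻 n = (c₁ * log n, c₂ * log n)` for all positive `n`. -/
theorem hyperbolic_erdos_additive_characterization_of_log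
    (F : ℕ → ℝ × ℝ)
    (hadd : ∀ m n : ℕ, 0 < m → 0 < n → F (m * n) = F m + F n)
    (hlim : Filter.Tendsto (fun n : ℕ => F (n + 1) - F n) Filter.atTop
      (nhds ((0 : ℝ), (0 : ℝ)))) :
    ∃ κ : ℝ × ℝ, ∀ n : ℕ, 0 < n →
      F n = (κ.1 * Real.log n, κ.2 * Real.log n) := by
  have h1 := erdos_real (fun n => (F n).1)
    (fun m n hm hn => by simp only [hadd m n hm hn, Prod.fst_add])
    (by simpa using hlim.fst_nhds)
  have h2 := erdos_real (fun n => (F n).2)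
    (fun m n hm hn => by simp only [hadd m n hm hn, Prod.snd_add])
    (by simpa using hlim.snd_nhds)
  refine ⟨((F 2).1 / Real.log 2, (F 2).2 / Real.log 2), fun n hn => ?_⟩
  have e1 := h1 n hn
  have e2 := h2 n hn
  exact Prod.ext e1 e2
end

section
/- Let n ≥ 1 and let p, q : Fin n → ℝ satisfy p(k) ≥ 0, q(k) ≥ 0 for all k, Σ_k p(k) = 1, and Σ_k q(k) = 1. Define the hyperbolic probability distribution 𝔎 on Fin n × Fin n by ω(s,t) = (p(s)/n, q(t)/n) ∈ ℝ × ℝ. Then its strong hyperbolic entropy H_s(𝔎) = Σ_{(s,t)} ( −(p(s)/n) · log(p(s)/n), −(q(t)/n) · log(q(t)/n) ) equals (H₁ + log n, H₂ + log n), where H₁ = Σ_s −p(s) log p(s) and H₂ = Σ_t −q(t) log q(t); in particular H_s(𝔓) = (H₁, H₂) ⪯ H_s(𝔎) in the componentwise partial order on 𝔻 = ℝ × ℝ. -/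
lemma aux_entropy_sum (n : ℕ) (hn : 1 ≤ n) (p : Fin n → ℝ)
    (hp : ∀ k, 0 ≤ p k) (hpsum : ∑ k, p k = 1) :
    (∑ m : Fin n × Fin n, -((p m.1 / n) * Real.log (p m.1 / n))) =
      (∑ s, -(p s * Real.log (p s))) + Real.log n := by
  have hn0 : (0:ℝ) < n := by exact_mod_cast hn
  rw [Fintype.sum_prod_type]
  have key : ∀ s : Fin n,
      (∑ _t : Fin n, -((p s / n) * Real.log (p s / n))) =
        -(p s * Real.log (p s)) + p s * Real.log n := by
    intro s
    rw [Finset.sum_const, Finset.card_univ, Fintype.card_fin, nsmul_eq_mul]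
    rcases eq_or_lt_of_le (hp s) with h | h
    · simp [← h]
    · rw [Real.log_div (ne_of_gt h) (ne_of_gt hn0)]
      field_simp
      ring
  rw [Finset.sum_congr rfl (fun s _ => key s), Finset.sum_add_distrib,
    ← Finset.sum_mul, hpsum, one_mul]

/-- The strong hyperbolic entropy of the hyperbolic probability
distribution `𝔎` on the `n²` pairs, `ω (s, t) = (p s / n, q t / n)`,
equals `(H₁ + log n, H₂ + log n)`, where `(H₁, H₂) = H_s(𝔓)`; in
particular `H_s(𝔓) ⪯ H_s(𝔎)` in the componentwise order on
`𝔻 ≅ ℝ × ℝ`. -/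
theorem strong_hyperbolic_entropy_of_K
    (n : ℕ) (hn : 1 ≤ n) (p q : Fin n → ℝ)
    (hp : ∀ k, 0 ≤ p k) (hq : ∀ k, 0 ≤ q k)
    (hpsum : ∑ k, p k = 1) (hqsum : ∑ k, q k = 1) :
    (∑ m : Fin n × Fin n, -((p m.1 / n) * Real.log (p m.1 / n))) =
      (∑ s, -(p s * Real.log (p s))) + Real.log n ∧
    (∑ m : Fin n × Fin n, -((q m.2 / n) * Real.log (q m.2 / n))) =
      (∑ t, -(q t * Real.log (q t))) + Real.log n ∧
    (∑ s, -(p s * Real.log (p s))) ≤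
      (∑ m : Fin n × Fin n, -((p m.1 / n) * Real.log (p m.1 / n))) ∧
    (∑ t, -(q t * Real.log (q t))) ≤
      (∑ m : Fin n × Fin n, -((q m.2 / n) * Real.log (q m.2 / n))) := by
  have h1 := aux_entropy_sum n hn p hp hpsum
  have h2' : (∑ m : Fin n × Fin n, -((q m.2 / n) * Real.log (q m.2 / n))) =
      (∑ t, -(q t * Real.log (q t))) + Real.log n := by
    have := aux_entropy_sum n hn q hq hqsum
    rw [← this, Fintype.sum_prod_type, Fintype.sum_prod_type, Finset.sum_comm]
  have hlog : 0 ≤ Real.log n := Real.log_nonneg (by exact_mod_cast hn)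
  exact ⟨h1, h2', by rw [h1]; linarith, by rw [h2']; linarith⟩
end
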